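/- Assume k ≤ LR and that R does not divide k. Then w_i(π*(s*)) ≥ w_i(π^(k)) for every 1 ≤ i ≤ k, and consequently MC(π^(k)) ≤ MC(π*(s*)); that is, when R ∤ k, adding a separate node reduces (does not increase) the capacity of the cluster DSS. -/

import Mathlib

/-- Relative location `h_π(i) = #{1 ≤ j ≤ i : π j = π i}`. -/
def relLoc (π : ℕ → ℕ) (i : ℕ) : ℕ :=
  ((Finset.Icc 1 i).filter (fun j => π j = π i)).card

/-- Intra-cluster coefficient `a_i(π) = d_I + 1 − h_π(i)` (truncated subtraction). -/
def aCoef (dI : ℕ) (π : ℕ → ℕ) (i : ℕ) : ℕ :=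
  dI + 1 - relLoc π i

/-- Cross-cluster coefficient `b_i(π) = max(0, d_C − (i − h_π(i)))` (truncated subtraction). -/
def bCoef (dC : ℕ) (π : ℕ → ℕ) (i : ℕ) : ℕ :=
  dC - (i - relLoc π i)

/-- Part incoming weight `w_i(π)`: for a separate position (`π i = 0`) it is
`(d_I + d_C + 1 − i)·β_C`, otherwise `a_i(π)·β_I + b_i(π)·β_C`. -/
noncomputable def weight (dI dC : ℕ) (βI βC : ℝ) (π : ℕ → ℕ) (i : ℕ) : ℝ :=
  if π i = 0 then ((dI + dC + 1 - i : ℕ) : ℝ) * βC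
  else (aCoef dI π i : ℝ) * βI + (bCoef dC π i : ℝ) * βC

/-- Min-cut `MC(π) = Σ_{i=1}^k min(α, w_i(π))`. -/
noncomputable def MC (k dI dC : ℕ) (βI βC α : ℝ) (π : ℕ → ℕ) : ℝ :=
  ∑ i ∈ Finset.Icc 1 k, min α (weight dI dC βI βC π i)

/-- A cluster order: a `k`-tuple with entries in `{0, 1, …, L}`. -/
def IsClusterOrder (L k : ℕ) (π : ℕ → ℕ) : Prop :=
  ∀ i, 1 ≤ i → i ≤ k → π i ≤ L

/-- A selected node distribution `(s_0, s_1, …, s_L)`: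
`R ≥ s_1 ≥ s_2 ≥ … ≥ s_L` and `s_0 + s_1 + … + s_L = k`. -/
def IsDist (L R k : ℕ) (s : ℕ → ℕ) : Prop :=
  (∀ i, 1 ≤ i → i + 1 ≤ L → s (i + 1) ≤ s i) ∧
  (∀ i, 1 ≤ i → i ≤ L → s i ≤ R) ∧
  ∑ i ∈ Finset.range (L + 1), s i = k

/-- `π ∈ Π(s)`: `π` is a cluster order with `#{1 ≤ j ≤ k : π j = c} = s c` for all `0 ≤ c ≤ L`. -/
def MemPi (L k : ℕ) (s : ℕ → ℕ) (π : ℕ → ℕ) : Prop :=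
  IsClusterOrder L k π ∧
  ∀ c, c ≤ L → ((Finset.Icc 1 k).filter (fun j => π j = c)).card = s c

/-- Vertical order of distribution `s` (possibly with separate entries, whose positions are
not constrained here):  over the cluster positions (`π i ≠ 0`) in increasing order, relative
locations are nondecreasing, with ties broken by increasing cluster index. -/
def IsVerticalOrder (L k : ℕ) (s : ℕ → ℕ) (π : ℕ → ℕ) : Prop :=
  MemPi L k s π ∧
  ∀ i j, 1 ≤ i → i < j → j ≤ k → π i ≠ 0 → π j ≠ 0 →
    relLoc π i ≤ relLoc π j ∧ (relLoc π i = relLoc π j → π i < π j)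

/-- The distribution `s*` (no separate node): `s*_0 = 0`, `s*_i = R` for `1 ≤ i ≤ ⌊k/R⌋`,
`s*_{⌊k/R⌋+1} = k − ⌊k/R⌋·R`, and `0` beyond. -/
def sStar0 (R k : ℕ) : ℕ → ℕ := fun i =>
  if i = 0 then 0
  else if i ≤ k / R then R
  else if i = k / R + 1 then k - k / R * R
  else 0

/-- The distribution with one separate node: `s_0 = 1`, `s_i = R` for `1 ≤ i ≤ ⌊(k−1)/R⌋`,
`s_{⌊(k−1)/R⌋+1} = (k−1) − ⌊(k−1)/R⌋·R`, and `0` beyond. -/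
def sStar1 (R k : ℕ) : ℕ → ℕ := fun i =>
  if i = 0 then 1
  else if i ≤ (k - 1) / R then R
  else if i = (k - 1) / R + 1 then (k - 1) - (k - 1) / R * R
  else 0

/-- `π^(j)`: the cluster order with exactly one separate entry, located at position `j`,
whose cluster entries form the vertical order of the distribution `sStar1 R k`. -/
def IsPiJ (L R k j : ℕ) (π : ℕ → ℕ) : Prop :=
  π j = 0 ∧ IsVerticalOrder L k (sStar1 R k) π


namespace Stmt18Aux

lemma relLoc_pos (π : ℕ → ℕ) {i : ℕ} (hi : 1 ≤ i) : 1 ≤ relLoc π i := by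
  have : i ∈ (Finset.Icc 1 i).filter (fun j => π j = π i) := by
    simp [Finset.mem_Icc, hi]
  exact Finset.card_pos.mpr ⟨i, this⟩

lemma relLoc_le_self (π : ℕ → ℕ) (i : ℕ) : relLoc π i ≤ i := by
  calc relLoc π i ≤ (Finset.Icc 1 i).card := Finset.card_filter_le _ _
  _ = i := by simp

lemma relLoc_strict (π : ℕ → ℕ) {i j : ℕ} (h1 : 1 ≤ i) (hij : i < j)
    (hππ : π i = π j) : relLoc π i < relLoc π j := by
  unfold relLoc
  rw [hππ]
  apply Finset.card_lt_card
  constructor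
  · exact Finset.filter_subset_filter _ (Finset.Icc_subset_Icc_right (le_of_lt hij))
  · intro hsub
    have hj : j ∈ (Finset.Icc 1 j).filter (fun j' => π j' = π j) := by
      simp [Finset.mem_Icc]; omega
    have := hsub hj
    simp [Finset.mem_Icc] at this
    omega

lemma relLoc_le_card (π : ℕ → ℕ) {i k : ℕ} (hik : i ≤ k) :
    relLoc π i ≤ ((Finset.Icc 1 k).filter (fun j => π j = π i)).card :=
  Finset.card_le_card (Finset.filter_subset_filter _ (Finset.Icc_subset_Icc_right hik))

lemma card_cluster_filter (π : ℕ → ℕ) (k c h : ℕ) :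
    (((Finset.Icc 1 k).filter (fun j => π j = c)).filter (fun j => relLoc π j ≤ h)).card
      = min (((Finset.Icc 1 k).filter (fun j => π j = c)).card) h := by
  set S := (Finset.Icc 1 k).filter (fun j => π j = c) with hS
  have hmem : ∀ j ∈ S, 1 ≤ j ∧ j ≤ k ∧ π j = c := by
    intro j hj
    simp only [hS, Finset.mem_filter, Finset.mem_Icc] at hj
    exact ⟨hj.1.1, hj.1.2, hj.2⟩
  have hinj : Set.InjOn (relLoc π) S := by
    intro a ha b hb hab
    by_contra hne
    rcases lt_or_gt_of_ne hne with hlt | hlt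
    · have := relLoc_strict π (hmem a ha).1 hlt ((hmem a ha).2.2.trans (hmem b hb).2.2.symm)
      omega
    · have := relLoc_strict π (hmem b hb).1 hlt ((hmem b hb).2.2.trans (hmem a ha).2.2.symm)
      omega
  have himg : S.image (relLoc π) = Finset.Icc 1 S.card := by
    apply Finset.eq_of_subset_of_card_le
    · intro x hx
      simp only [Finset.mem_image] at hx
      obtain ⟨j, hj, rfl⟩ := hx
      obtain ⟨hj1, hjk, hjc⟩ := hmem j hj
      refine Finset.mem_Icc.mpr ⟨relLoc_pos π hj1, ?_⟩
      have := relLoc_le_card π hjk (i := j)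
      rwa [hjc, ← hS] at this
    · rw [Finset.card_image_of_injOn hinj]; simp
  have hkey : (S.filter (fun j => relLoc π j ≤ h)).image (relLoc π)
      = (Finset.Icc 1 S.card).filter (fun x => x ≤ h) := by
    rw [← himg, Finset.filter_image]
  have hc1 : (S.filter (fun j => relLoc π j ≤ h)).card
      = ((Finset.Icc 1 S.card).filter (fun x => x ≤ h)).card := by
    rw [← hkey, Finset.card_image_of_injOn (hinj.mono (fun x hx => Finset.filter_subset _ _ hx))]
  rw [hc1]
  have : (Finset.Icc 1 S.card).filter (fun x => x ≤ h) = Finset.Icc 1 (min S.card h) := by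
    ext x; simp [Finset.mem_Icc]; omega
  rw [this]; simp

lemma total_count (π : ℕ → ℕ) (L k : ℕ) (s : ℕ → ℕ) (hmem : MemPi L k s π) (h : ℕ) :
    ((Finset.Icc 1 k).filter (fun j => π j ≠ 0 ∧ relLoc π j ≤ h)).card
      = ∑ c ∈ Finset.Icc 1 L, min (s c) h := by
  rw [Finset.card_eq_sum_card_fiberwise (f := π) (t := Finset.Icc 1 L) ?hf]
  · apply Finset.sum_congr rfl
    intro c hc
    have hc' := Finset.mem_Icc.mp hc
    have heq : (((Finset.Icc 1 k).filter (fun j => π j ≠ 0 ∧ relLoc π j ≤ h)).filter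
        (fun j => π j = c))
        = ((Finset.Icc 1 k).filter (fun j => π j = c)).filter (fun j => relLoc π j ≤ h) := by
      ext j
      simp only [Finset.mem_filter, Finset.mem_Icc]
      constructor
      · rintro ⟨⟨hj, _, hrl⟩, hjc⟩; exact ⟨⟨hj, hjc⟩, hrl⟩
      · rintro ⟨⟨hj, hjc⟩, hrl⟩
        exact ⟨⟨hj, by omega, hrl⟩, hjc⟩
    rw [heq, card_cluster_filter, hmem.2 c hc'.2]
  case hf =>
    intro x hx
    simp only [Finset.mem_coe, Finset.mem_filter, Finset.mem_Icc] at hx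
    exact Finset.mem_Icc.mpr ⟨Nat.one_le_iff_ne_zero.mpr hx.2.1, hmem.1 x hx.1.1 hx.1.2⟩

lemma aux_div (R k : ℕ) (hR : 0 < R) (hr : k % R ≠ 0) :
    (k-1)/R = k/R := by
  have h1 : k / R * R + k % R = k := Nat.div_add_mod' k R
  have h2 : k % R < R := Nat.mod_lt _ hR
  apply Nat.div_eq_of_lt_le
  · omega
  · rw [add_mul, one_mul]; omega

lemma sStar_le (R k : ℕ) (hR : 0 < R) (hr : k % R ≠ 0) (c : ℕ) (hc : 1 ≤ c) :
    sStar1 R k c ≤ sStar0 R k c := by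
  have hd := aux_div R k hR hr
  have h1 : k / R * R + k % R = k := Nat.div_add_mod' k R
  simp only [sStar0, sStar1, hd]
  split_ifs <;> omega

lemma sStar0_le_R (R k : ℕ) (hR : 0 < R) (c : ℕ) (hc : 1 ≤ c) : sStar0 R k c ≤ R := by
  have h1 : k / R * R + k % R = k := Nat.div_add_mod' k R
  have h2 : k % R < R := Nat.mod_lt _ hR
  simp only [sStar0]
  split_ifs <;> omega

lemma sStar1_le_R (R k : ℕ) (hR : 0 < R) (c : ℕ) (hc : 1 ≤ c) : sStar1 R k c ≤ R := by
  have h1 : (k-1) / R * R + (k-1) % R = k - 1 := Nat.div_add_mod' (k-1) R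
  have h2 : (k-1) % R < R := Nat.mod_lt _ hR
  simp only [sStar1]
  split_ifs <;> omega

lemma weight_mono_real (βI βC : ℝ) (hβ : βC ≤ βI) (hβC : 0 < βC)
    {a0 a1 b0 b1 : ℕ} (hb : b0 ≤ b1) (hab : a1 + b1 ≤ a0 + b0) :
    (a1:ℝ)*βI + b1*βC ≤ a0*βI + b0*βC := by
  have h1 : ((b1 - b0 : ℕ) : ℝ) * βC ≤ ((b1 - b0 : ℕ) : ℝ) * βI :=
    mul_le_mul_of_nonneg_left hβ (Nat.cast_nonneg _)
  have h2 : ((b1 - b0 : ℕ) : ℝ) * βI ≤ ((a0 - a1 : ℕ) : ℝ) * βI := by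
    apply mul_le_mul_of_nonneg_right _ (hβC.le.trans hβ)
    exact_mod_cast (by omega : b1 - b0 ≤ a0 - a1)
  have e1 : ((b1 - b0 : ℕ) : ℝ) = (b1:ℝ) - b0 := by
    push_cast [hb]; ring
  have e2 : ((a0 - a1 : ℕ) : ℝ) = (a0:ℝ) - a1 := by
    push_cast [(by omega : a1 ≤ a0)]; ring
  rw [e1] at h1 h2
  rw [e2] at h2
  linarith

lemma sep_weight (βI βC : ℝ) (hβ : βC ≤ βI) (hβC : 0 < βC) {t a b : ℕ} (h : t ≤ a + b) :
    (t:ℝ)*βC ≤ a*βI + b*βC := by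
  have h1 : (t:ℝ)*βC ≤ ((a:ℝ) + b)*βC := by
    apply mul_le_mul_of_nonneg_right _ hβC.le
    exact_mod_cast h
  have h2 : (a:ℝ)*βC ≤ (a:ℝ)*βI := mul_le_mul_of_nonneg_left hβ (Nat.cast_nonneg _)
  nlinarith

end Stmt18Aux

open Stmt18Aux in
/-- if `R ∤ k` then `w_i(π*(s*)) ≥ w_i(π^(k))` for all `i`, hence
`MC(π^(k)) ≤ MC(π*(s*))`: adding a separate node does not increase the capacity. -/
theorem stmt18 (L R k dI dC : ℕ) (βI βC α : ℝ)
    (hL : 1 ≤ L) (hR : 2 ≤ R) (hk : 2 ≤ k)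
    (hdI : dI = R - 1) (hdC : 1 ≤ dC) (hkd : k ≤ dI + dC)
    (hβ : βC ≤ βI) (hβC : 0 < βC) (hα : 0 < α)
    (hkLR : k ≤ L * R) (hndvd : ¬ R ∣ k)
    (πs : ℕ → ℕ) (hπs : IsVerticalOrder L k (sStar0 R k) πs)
    (πk : ℕ → ℕ) (hπk : IsPiJ L R k k πk) :
    (∀ i, 1 ≤ i → i ≤ k →
      weight dI dC βI βC πk i ≤ weight dI dC βI βC πs i) ∧
    MC k dI dC βI βC α πk ≤ MC k dI dC βI βC α πs := by

  obtain ⟨hπk0, hπkmem, hπkvert⟩ := hπk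
  obtain ⟨hπsmem, hπsvert⟩ := hπs
  have hRpos : 0 < R := by omega
  have hmod : k % R ≠ 0 := fun h => hndvd (Nat.dvd_of_mod_eq_zero h)
  -- πs has no separate positions
  have hs0 : ∀ j, 1 ≤ j → j ≤ k → πs j ≠ 0 := by
    intro j h1 h2 hj0
    have hc : ((Finset.Icc 1 k).filter (fun j => πs j = 0)).card = 0 := by
      rw [hπsmem.2 0 (Nat.zero_le L)]; simp [sStar0]
    have hmem : j ∈ (Finset.Icc 1 k).filter (fun j => πs j = 0) := by
      rw [Finset.mem_filter, Finset.mem_Icc]; exact ⟨⟨h1, h2⟩, hj0⟩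
    rw [Finset.card_eq_zero.mp hc] at hmem
    exact absurd hmem (Finset.notMem_empty j)
  -- πk has no separate positions below k
  have hk0 : ∀ j, 1 ≤ j → j < k → πk j ≠ 0 := by
    intro j h1 h2 hj0
    have hc1 : ((Finset.Icc 1 k).filter (fun j => πk j = 0)).card = 1 := by
      rw [hπkmem.2 0 (Nat.zero_le L)]; simp [sStar1]
    have hsub : ({j, k} : Finset ℕ) ⊆ (Finset.Icc 1 k).filter (fun j => πk j = 0) := by
      intro x hx
      simp only [Finset.mem_insert, Finset.mem_singleton] at hx
      rcases hx with rfl | rfl <;> rw [Finset.mem_filter, Finset.mem_Icc]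
      · exact ⟨⟨h1, by omega⟩, hj0⟩
      · exact ⟨⟨by omega, le_rfl⟩, hπk0⟩
    have := Finset.card_le_card hsub
    rw [Finset.card_pair (by omega : j ≠ k)] at this
    omega
  -- relLoc is bounded by R
  have hrelR : ∀ (π : ℕ → ℕ) (s : ℕ → ℕ), MemPi L k s π → (∀ c, 1 ≤ c → s c ≤ R) →
      ∀ i, 1 ≤ i → i ≤ k → π i ≠ 0 → relLoc π i ≤ R := by
    intro π s hmem hsR i h1 h2 hne
    have h := relLoc_le_card π h2 (i := i)
    rw [hmem.2 (π i) (hmem.1 i h1 h2)] at h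
    exact h.trans (hsR (π i) (Nat.one_le_iff_ne_zero.mpr hne))
  -- relLoc comparison on positions below k
  have hrel : ∀ i, 1 ≤ i → i < k → relLoc πs i ≤ relLoc πk i := by
    intro i h1 hik
    have hi_le : i ≤ ∑ c ∈ Finset.Icc 1 L, min (sStar1 R k c) (relLoc πk i) := by
      rw [← total_count πk L k _ hπkmem (relLoc πk i)]
      have hsub : Finset.Icc 1 i ⊆
          (Finset.Icc 1 k).filter (fun j => πk j ≠ 0 ∧ relLoc πk j ≤ relLoc πk i) := by
        intro j hj
        rw [Finset.mem_Icc] at hj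
        rw [Finset.mem_filter, Finset.mem_Icc]
        refine ⟨⟨hj.1, by omega⟩, hk0 j hj.1 (by omega), ?_⟩
        rcases eq_or_lt_of_le hj.2 with heq | hlt
        · rw [heq]
        · exact (hπkvert j i hj.1 hlt (by omega) (hk0 j hj.1 (by omega)) (hk0 i h1 hik)).1
      calc i = (Finset.Icc 1 i).card := by simp
      _ ≤ _ := Finset.card_le_card hsub
    have hle2 : (∑ c ∈ Finset.Icc 1 L, min (sStar1 R k c) (relLoc πk i))
        ≤ ∑ c ∈ Finset.Icc 1 L, min (sStar0 R k c) (relLoc πk i) := by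
      apply Finset.sum_le_sum
      intro c hc
      exact min_le_min (sStar_le R k hRpos hmod c (Finset.mem_Icc.mp hc).1) le_rfl
    by_contra hcon
    push_neg at hcon
    have hcard : ((Finset.Icc 1 k).filter
        (fun j => πs j ≠ 0 ∧ relLoc πs j ≤ relLoc πk i)).card ≤ i - 1 := by
      have hsub : ((Finset.Icc 1 k).filter (fun j => πs j ≠ 0 ∧ relLoc πs j ≤ relLoc πk i))
          ⊆ Finset.Icc 1 (i-1) := by
        intro j hj
        rw [Finset.mem_filter, Finset.mem_Icc] at hj
        rw [Finset.mem_Icc]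
        refine ⟨hj.1.1, ?_⟩
        by_contra hji
        push_neg at hji
        rcases eq_or_lt_of_le (by omega : i ≤ j) with heq | hlt
        · rw [← heq] at hj; omega
        · have := (hπsvert i j h1 hlt hj.1.2 (hs0 i h1 (by omega)) hj.2.1).1
          omega
      calc _ ≤ (Finset.Icc 1 (i-1)).card := Finset.card_le_card hsub
      _ = i - 1 := by simp
    rw [total_count πs L k _ hπsmem (relLoc πk i)] at hcard
    omega
  -- pointwise weight comparison
  have hw : ∀ i, 1 ≤ i → i ≤ k → weight dI dC βI βC πk i ≤ weight dI dC βI βC πs i := by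
    intro i h1 h2
    rcases lt_or_eq_of_le h2 with hik | heq
    · -- i < k
      have h0le : relLoc πs i ≤ relLoc πk i := hrel i h1 hik
      have hR1 : relLoc πk i ≤ R :=
        hrelR πk _ hπkmem (fun c hc => sStar1_le_R R k hRpos c hc) i h1 h2 (hk0 i h1 hik)
      have h1pos : 1 ≤ relLoc πs i := relLoc_pos πs h1
      have hles : relLoc πs i ≤ i := relLoc_le_self πs i
      have hlek : relLoc πk i ≤ i := relLoc_le_self πk i
      rw [weight, weight, if_neg (hk0 i h1 hik), if_neg (hs0 i h1 h2)]
      unfold aCoef bCoef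
      apply weight_mono_real βI βC hβ hβC
      · omega
      · omega
    · -- i = k
      subst heq
      rw [weight, weight, if_pos hπk0, if_neg (hs0 i h1 le_rfl)]
      unfold aCoef bCoef
      apply sep_weight βI βC hβ hβC
      have hRs : relLoc πs i ≤ R :=
        hrelR πs _ hπsmem (fun c hc => sStar0_le_R R _ hRpos c hc) i h1 le_rfl
          (hs0 i h1 le_rfl)
      have h1pos : 1 ≤ relLoc πs i := relLoc_pos πs h1
      have hles : relLoc πs i ≤ i := relLoc_le_self πs i
      omega
  refine ⟨hw, ?_⟩
  unfold MC
  apply Finset.sum_le_sum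
  intro i hi
  have hi' := Finset.mem_Icc.mp hi
  exact min_le_min le_rfl (hw i hi'.1 hi'.2)
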